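/- Let τ > 0, σ > 0 and k ∈ ℝ. Regard the Black-Scholes call price u^BS(σ; z) = e^z Φ(d₊(σ,z)) − e^k Φ(d₋(σ,z)) as a function of z, where d±(σ,z) = (z − k ± σ²τ/2)/(σ√τ) and Φ is the standard normal CDF, and set G(z) := ∂_z² u^BS(σ; z) − ∂_z u^BS(σ; z). Then for every m ∈ ℕ and every z ∈ ℝ, the m-th derivative of G satisfies G^{(m)}(z) = (−1/√(2σ²τ))^m · H_m(w) · (1/(τσ)) · ∂_σ u^BS(σ; z), where w = (z − k − σ²τ/2)/√(2σ²τ) and H_m is the m-th physicists' Hermite polynomial, characterized by H_m(x) = (−1)^m e^{x²} (d^m/dx^m) e^{−x²}, equivalently H_m(x) = 2^{m/2}·He_m(x√2) with He_m the probabilists' Hermite polynomial. -/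

import Mathlib

open Real

/-- The standard normal CDF. -/
noncomputable def normCDF (x : ℝ) : ℝ :=
  ∫ t in Set.Iic x, (2 * π) ^ (-(1 : ℝ) / 2) * Real.exp (-t ^ 2 / 2)

/-- The Black-Scholes call price as a function of volatility `σ` and log-price `z`. -/
noncomputable def uBS (τ k σ z : ℝ) : ℝ :=
  Real.exp z * normCDF ((z - k + σ ^ 2 * τ / 2) / (σ * Real.sqrt τ))
    - Real.exp k * normCDF ((z - k - σ ^ 2 * τ / 2) / (σ * Real.sqrt τ))

/-- The physicists' Hermite polynomial `H_m`, expressed through the probabilists'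
Hermite polynomial `He_m` of Mathlib via `H_m(x) = 2^(m/2) · He_m(x·√2)`. -/
noncomputable def physHermite (m : ℕ) (x : ℝ) : ℝ :=
  2 ^ ((m : ℝ) / 2) * ((Polynomial.hermite m).map (Int.castRingHom ℝ)).eval (x * Real.sqrt 2)

open MeasureTheory

noncomputable def gauss (x : ℝ) : ℝ := (2 * π) ^ (-(1 : ℝ) / 2) * Real.exp (-x ^ 2 / 2)

lemma gauss_cont : Continuous gauss := by
  unfold gauss; fun_prop

lemma gauss_integrable : Integrable gauss := by
  have h : Integrable fun x : ℝ => Real.exp (-(1/2 : ℝ) * x ^ 2) := integrable_exp_neg_mul_sq (by norm_num)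
  have h2 := h.const_mul ((2 * π) ^ (-(1 : ℝ) / 2))
  convert h2 using 2 with x
  unfold gauss; ring_nf

lemma normCDF_eq (y : ℝ) : normCDF y = normCDF 0 + ∫ t in (0:ℝ)..y, gauss t := by
  have := intervalIntegral.integral_Iic_sub_Iic (μ := volume) (f := gauss) (a := 0) (b := y)
    gauss_integrable.integrableOn gauss_integrable.integrableOn
  have h1 : normCDF y = ∫ t in Set.Iic y, gauss t := rfl
  have h0 : normCDF 0 = ∫ t in Set.Iic (0:ℝ), gauss t := rfl
  rw [h1, h0, ← this]; ring

lemma hasDerivAt_normCDF (x : ℝ) : HasDerivAt normCDF (gauss x) x := by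
  have key : normCDF = fun y => normCDF 0 + ∫ t in (0:ℝ)..y, gauss t := funext normCDF_eq
  rw [key]
  exact (intervalIntegral.integral_hasDerivAt_right gauss_integrable.intervalIntegrable
    gauss_cont.aestronglyMeasurable.stronglyMeasurableAtFilter gauss_cont.continuousAt).const_add _


lemma contDiff_g : ContDiff ℝ ((⊤:ℕ∞):WithTop ℕ∞) (fun y : ℝ => Real.exp (-(y ^ 2 / 2))) :=
  (((contDiff_id.pow 2).div_const 2).neg).exp

lemma iteratedDeriv_cmul (C : ℝ) (g : ℝ → ℝ) (hg : ContDiff ℝ ((⊤:ℕ∞):WithTop ℕ∞) g) (n : ℕ) :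
    iteratedDeriv n (fun x => C * g x) = fun x => C * iteratedDeriv n g x := by
  induction n with
  | zero => simp
  | succ n ih =>
    funext x
    rw [iteratedDeriv_succ, ih, iteratedDeriv_succ]
    refine deriv_const_mul C ?_
    have := (hg.iterate_deriv n).differentiable (by simp)
    simpa [iteratedDeriv_eq_iterate] using this x

lemma iter_gauss (C a b : ℝ) (m : ℕ) (z : ℝ) :
    iteratedDeriv m (fun z => C * Real.exp (-(a * z + b) ^ 2)) z
      = (-a) ^ m * physHermite m (a * z + b) * (C * Real.exp (-(a * z + b) ^ 2)) := by
  have hsq : Real.sqrt 2 ^ 2 = 2 := Real.sq_sqrt (by norm_num)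
  set F : ℝ → ℝ := fun y => C * Real.exp (-(y ^ 2 / 2)) with hF
  have hFc : ContDiff ℝ ((⊤:ℕ∞):WithTop ℕ∞) F := contDiff_const.mul contDiff_g
  have hiterF : ∀ y : ℝ, iteratedDeriv m F y
      = C * ((-1 : ℝ) ^ m * Polynomial.aeval y (Polynomial.hermite m) * Real.exp (-(y ^ 2 / 2))) := by
    intro y
    rw [hF, iteratedDeriv_cmul C _ contDiff_g, iteratedDeriv_eq_iterate]
    show C * deriv^[m] _ y = _
    rw [Polynomial.deriv_gaussian_eq_hermite_mul_gaussian]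
  set f : ℝ → ℝ := fun u => F (u + Real.sqrt 2 * b) with hf
  have hfun : (fun z => C * Real.exp (-(a * z + b) ^ 2))
      = fun z => f (Real.sqrt 2 * a * z) := by
    funext z
    show _ = F (Real.sqrt 2 * a * z + Real.sqrt 2 * b)
    rw [hF]
    congr 1
    have h2 : Real.sqrt 2 * a * z + Real.sqrt 2 * b = Real.sqrt 2 * (a * z + b) := by ring
    rw [h2, mul_pow, hsq]
    ring
  have hfc : ContDiff ℝ (m : WithTop ℕ∞) f := by
    refine (hFc.of_le (by exact_mod_cast le_top)).comp ?_
    exact contDiff_id.add contDiff_const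
  rw [hfun, iteratedDeriv_comp_const_mul hfc (Real.sqrt 2 * a)]
  show (Real.sqrt 2 * a) ^ m * iteratedDeriv m f (Real.sqrt 2 * a * z) = _
  have hfshift : iteratedDeriv m f (Real.sqrt 2 * a * z)
      = iteratedDeriv m F (Real.sqrt 2 * a * z + Real.sqrt 2 * b) :=
    congrFun (iteratedDeriv_comp_add_const m F (Real.sqrt 2 * b)) _
  rw [hfshift, hiterF]
  have harg : Real.sqrt 2 * a * z + Real.sqrt 2 * b = (a * z + b) * Real.sqrt 2 := by ring
  rw [harg]
  have hexp : Real.exp (-(((a * z + b) * Real.sqrt 2) ^ 2 / 2)) = Real.exp (-(a * z + b) ^ 2) := by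
    congr 1; rw [mul_pow, hsq]; ring
  rw [hexp]
  have hpow : (Real.sqrt 2 * a) ^ m = 2 ^ ((m : ℝ) / 2) * a ^ m := by
    rw [mul_pow]
    congr 1
    rw [show Real.sqrt 2 = (2 : ℝ) ^ ((1:ℝ)/2) from Real.sqrt_eq_rpow 2,
      ← Real.rpow_natCast ((2:ℝ) ^ ((1:ℝ)/2)) m, ← Real.rpow_mul (by norm_num)]
    ring_nf
  rw [hpow]
  unfold physHermite
  rw [Polynomial.aeval_def, Polynomial.eval_map,
    show (algebraMap ℤ ℝ) = Int.castRingHom ℝ from rfl, neg_pow a m]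
  ring


section BS
variable (τ σ k : ℝ) (hτ : 0 < τ) (hσ : 0 < σ)

-- key pointwise identity
lemma key_id (hτ : 0 < τ) (hσ : 0 < σ) (z : ℝ) :
    Real.exp z * gauss ((z - k + σ ^ 2 * τ / 2) / (σ * Real.sqrt τ))
      = Real.exp k * gauss ((z - k - σ ^ 2 * τ / 2) / (σ * Real.sqrt τ)) := by
  have hs : σ * Real.sqrt τ ≠ 0 := by positivity
  have hs2 : (σ * Real.sqrt τ) ^ 2 = σ ^ 2 * τ := by
    rw [mul_pow, Real.sq_sqrt hτ.le]
  unfold gauss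
  rw [mul_left_comm, mul_left_comm (Real.exp k), ← Real.exp_add, ← Real.exp_add]
  congr 1
  rw [div_pow, div_pow, hs2]
  have hστ : σ ^ 2 * τ ≠ 0 := by positivity
  field_simp
  ring

lemma hasDerivAt_z (hτ : 0 < τ) (hσ : 0 < σ) (z : ℝ) :
    HasDerivAt (fun z' => uBS τ k σ z')
      (Real.exp z * normCDF ((z - k + σ ^ 2 * τ / 2) / (σ * Real.sqrt τ))) z := by
  have hs : σ * Real.sqrt τ ≠ 0 := by positivity
  have hdp : HasDerivAt (fun z' => (z' - k + σ ^ 2 * τ / 2) / (σ * Real.sqrt τ))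
      (1 / (σ * Real.sqrt τ)) z := by
    simpa using (((hasDerivAt_id z).sub_const k).add_const (σ ^ 2 * τ / 2)).div_const
      (σ * Real.sqrt τ)
  have hdm : HasDerivAt (fun z' => (z' - k - σ ^ 2 * τ / 2) / (σ * Real.sqrt τ))
      (1 / (σ * Real.sqrt τ)) z := by
    simpa using (((hasDerivAt_id z).sub_const k).sub_const (σ ^ 2 * τ / 2)).div_const
      (σ * Real.sqrt τ)
  have h1 : HasDerivAt (fun z' => normCDF ((z' - k + σ ^ 2 * τ / 2) / (σ * Real.sqrt τ)))
      (gauss ((z - k + σ ^ 2 * τ / 2) / (σ * Real.sqrt τ)) * (1 / (σ * Real.sqrt τ))) z :=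
    (hasDerivAt_normCDF _).comp z hdp
  have h2 : HasDerivAt (fun z' => normCDF ((z' - k - σ ^ 2 * τ / 2) / (σ * Real.sqrt τ)))
      (gauss ((z - k - σ ^ 2 * τ / 2) / (σ * Real.sqrt τ)) * (1 / (σ * Real.sqrt τ))) z :=
    (hasDerivAt_normCDF _).comp z hdm
  have hmain := ((Real.hasDerivAt_exp z).mul h1).sub (h2.const_mul (Real.exp k))
  have : HasDerivAt (fun z' => uBS τ k σ z') _ z := hmain
  convert this using 1
  have hk := key_id τ σ k hτ hσ z
  rw [show Real.exp z * (gauss ((z - k + σ ^ 2 * τ / 2) / (σ * Real.sqrt τ)) * (1 / (σ * Real.sqrt τ)))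
      = Real.exp k * (gauss ((z - k - σ ^ 2 * τ / 2) / (σ * Real.sqrt τ)) * (1 / (σ * Real.sqrt τ)))
    from by rw [← mul_assoc, hk, mul_assoc]]
  ring

lemma deriv_z_eq (hτ : 0 < τ) (hσ : 0 < σ) :
    deriv (fun z' => uBS τ k σ z')
      = fun z => Real.exp z * normCDF ((z - k + σ ^ 2 * τ / 2) / (σ * Real.sqrt τ)) :=
  funext fun z => (hasDerivAt_z τ σ k hτ hσ z).deriv

lemma G_eq (hτ : 0 < τ) (hσ : 0 < σ) (z : ℝ) :
    deriv (deriv fun z' => uBS τ k σ z') z - deriv (fun z' => uBS τ k σ z') z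
      = Real.exp k * gauss ((z - k - σ ^ 2 * τ / 2) / (σ * Real.sqrt τ)) / (σ * Real.sqrt τ) := by
  rw [deriv_z_eq τ σ k hτ hσ]
  have hdp : HasDerivAt (fun z' => (z' - k + σ ^ 2 * τ / 2) / (σ * Real.sqrt τ))
      (1 / (σ * Real.sqrt τ)) z := by
    simpa using (((hasDerivAt_id z).sub_const k).add_const (σ ^ 2 * τ / 2)).div_const
      (σ * Real.sqrt τ)
  have h2 : HasDerivAt
      (fun z => Real.exp z * normCDF ((z - k + σ ^ 2 * τ / 2) / (σ * Real.sqrt τ)))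
      (Real.exp z * normCDF ((z - k + σ ^ 2 * τ / 2) / (σ * Real.sqrt τ))
        + Real.exp z * (gauss ((z - k + σ ^ 2 * τ / 2) / (σ * Real.sqrt τ))
            * (1 / (σ * Real.sqrt τ)))) z := by
    exact (Real.hasDerivAt_exp z).mul ((hasDerivAt_normCDF _).comp z hdp)
  rw [h2.deriv]
  have hk := key_id τ σ k hτ hσ z
  rw [show Real.exp z * (gauss ((z - k + σ ^ 2 * τ / 2) / (σ * Real.sqrt τ)) * (1 / (σ * Real.sqrt τ)))
      = Real.exp k * (gauss ((z - k - σ ^ 2 * τ / 2) / (σ * Real.sqrt τ)) * (1 / (σ * Real.sqrt τ)))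
    from by rw [← mul_assoc, hk, mul_assoc]]
  show _ = _
  beta_reduce
  ring

lemma vega_eq (hτ : 0 < τ) (hσ : 0 < σ) (z : ℝ) :
    deriv (fun σ' => uBS τ k σ' z) σ
      = Real.exp k * gauss ((z - k - σ ^ 2 * τ / 2) / (σ * Real.sqrt τ)) * Real.sqrt τ := by
  have hs : σ * Real.sqrt τ ≠ 0 := by positivity
  have hden : HasDerivAt (fun σ' : ℝ => σ' * Real.sqrt τ) (Real.sqrt τ) σ := by
    simpa using (hasDerivAt_id σ).mul_const (Real.sqrt τ)
  have hnp : HasDerivAt (fun σ' : ℝ => z - k + σ' ^ 2 * τ / 2) (σ * τ) σ := by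
    have := (((hasDerivAt_pow 2 σ).mul_const τ).div_const 2).const_add (z - k)
    exact this.congr_deriv (by push_cast; ring)
  have hnm : HasDerivAt (fun σ' : ℝ => z - k - σ' ^ 2 * τ / 2) (-(σ * τ)) σ := by
    have := HasDerivAt.const_sub (z - k) (((hasDerivAt_pow 2 σ).mul_const τ).div_const 2)
    exact this.congr_deriv (by push_cast; ring)
  have hdp : HasDerivAt (fun σ' : ℝ => (z - k + σ' ^ 2 * τ / 2) / (σ' * Real.sqrt τ))
      ((σ * τ * (σ * Real.sqrt τ) - (z - k + σ ^ 2 * τ / 2) * Real.sqrt τ)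
        / (σ * Real.sqrt τ) ^ 2) σ := hnp.div hden hs
  have hdm : HasDerivAt (fun σ' : ℝ => (z - k - σ' ^ 2 * τ / 2) / (σ' * Real.sqrt τ))
      ((-(σ * τ) * (σ * Real.sqrt τ) - (z - k - σ ^ 2 * τ / 2) * Real.sqrt τ)
        / (σ * Real.sqrt τ) ^ 2) σ := hnm.div hden hs
  have hmain : HasDerivAt (fun σ' => uBS τ k σ' z)
      (Real.exp z * (gauss ((z - k + σ ^ 2 * τ / 2) / (σ * Real.sqrt τ))
          * ((σ * τ * (σ * Real.sqrt τ) - (z - k + σ ^ 2 * τ / 2) * Real.sqrt τ)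
            / (σ * Real.sqrt τ) ^ 2))
        - Real.exp k * (gauss ((z - k - σ ^ 2 * τ / 2) / (σ * Real.sqrt τ))
          * ((-(σ * τ) * (σ * Real.sqrt τ) - (z - k - σ ^ 2 * τ / 2) * Real.sqrt τ)
            / (σ * Real.sqrt τ) ^ 2))) σ := by
    exact (((hasDerivAt_normCDF _).comp σ hdp).const_mul (Real.exp z)).sub
      (((hasDerivAt_normCDF _).comp σ hdm).const_mul (Real.exp k))
  rw [hmain.deriv]
  rw [← mul_assoc, ← mul_assoc, key_id τ σ k hτ hσ z]
  have hs2 : (σ * Real.sqrt τ) ^ 2 = σ ^ 2 * τ := by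
    rw [mul_pow, Real.sq_sqrt hτ.le]
  rw [hs2]
  have hστ : σ ^ 2 * τ ≠ 0 := by positivity
  have hXY : (σ * τ * (σ * Real.sqrt τ) - (z - k + σ ^ 2 * τ / 2) * Real.sqrt τ) / (σ ^ 2 * τ)
      - (-(σ * τ) * (σ * Real.sqrt τ) - (z - k - σ ^ 2 * τ / 2) * Real.sqrt τ) / (σ ^ 2 * τ)
      = Real.sqrt τ := by
    field_simp
    ring
  linear_combination (Real.exp k * gauss ((z - k - σ ^ 2 * τ / 2) / (σ * Real.sqrt τ))) * hXY

end BS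

theorem hermite_identity_for_dz_derivatives
    (τ σ k : ℝ) (hτ : 0 < τ) (hσ : 0 < σ)
    (G : ℝ → ℝ)
    (hG : ∀ z : ℝ, G z =
      deriv (deriv fun z' => uBS τ k σ z') z - deriv (fun z' => uBS τ k σ z') z) :
    ∀ (m : ℕ) (z : ℝ),
      iteratedDeriv m G z
        = (-1 / Real.sqrt (2 * σ ^ 2 * τ)) ^ m
          * physHermite m ((z - k - σ ^ 2 * τ / 2) / Real.sqrt (2 * σ ^ 2 * τ))
          * (1 / (τ * σ))
          * deriv (fun σ' => uBS τ k σ' z) σ := by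
  intro m z
  have hpos : (0:ℝ) < 2 * σ ^ 2 * τ := by positivity
  set A : ℝ := (Real.sqrt (2 * σ ^ 2 * τ))⁻¹ with hA
  set B : ℝ := (-k - σ ^ 2 * τ / 2) * A with hB
  set C : ℝ := Real.exp k * (2 * π) ^ (-(1:ℝ) / 2) / (σ * Real.sqrt τ) with hC
  have hs : σ * Real.sqrt τ ≠ 0 := by positivity
  have hs2 : (σ * Real.sqrt τ) ^ 2 = σ ^ 2 * τ := by rw [mul_pow, Real.sq_sqrt hτ.le]
  have hA2 : A ^ 2 = (2 * σ ^ 2 * τ)⁻¹ := by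
    rw [hA, ← Real.sqrt_inv, Real.sq_sqrt (by positivity)]
  have hστ : σ ^ 2 * τ ≠ 0 := by positivity
  have hexpeq : ∀ z : ℝ,
      Real.exp (-((z - k - σ ^ 2 * τ / 2) / (σ * Real.sqrt τ)) ^ 2 / 2)
        = Real.exp (-(A * z + B) ^ 2) := by
    intro z
    congr 1
    have harg : A * z + B = (z - k - σ ^ 2 * τ / 2) * A := by rw [hB]; ring
    rw [harg, mul_pow, hA2, div_pow, hs2, neg_div, div_div, ← div_eq_mul_inv]
    congr 1
    ring
  have hGfun : G = fun z => C * Real.exp (-(A * z + B) ^ 2) := by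
    funext y
    rw [hG y, G_eq τ σ k hτ hσ y]
    unfold gauss
    rw [hexpeq y, hC]
    ring
  have hvega : deriv (fun σ' => uBS τ k σ' z) σ
      = (τ * σ) * (C * Real.exp (-(A * z + B) ^ 2)) := by
    rw [vega_eq τ σ k hτ hσ z]
    unfold gauss
    rw [hexpeq z, hC]
    have hss : Real.sqrt τ * Real.sqrt τ = τ := Real.mul_self_sqrt hτ.le
    field_simp
    linear_combination hss
  have h1 : (-1 / Real.sqrt (2 * σ ^ 2 * τ)) = -A := by rw [hA, neg_div, one_div]
  have h2 : (z - k - σ ^ 2 * τ / 2) / Real.sqrt (2 * σ ^ 2 * τ) = A * z + B := by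
    rw [div_eq_mul_inv, ← hA, hB]; ring
  rw [hGfun, iter_gauss, h1, h2, hvega]
  have hτσ : (τ * σ) ≠ 0 := by positivity
  field_simp
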